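/- In the setting of the bias–variance decomposition with modified input X_a satisfying (X_a ⟂⟂ Y)|X and E[X_a|X] = H^{-1}X for an invertible matrix H: if the smallest eigenvalue of Γ = E[(X_a − E[X_a|X])(X_a − E[X_a|X])ᵀ] is at least μ > 0, and θ_a* minimizes R_a(θ) = E[(Y − θᵀX_a)²], then ‖θ_a*‖₂² ≤ B_a/μ, where B_a = inf_θ R_a(θ) − inf_θ E[(Y − θᵀX)²]. -/

import Mathlib

open MeasureTheory ProbabilityTheory Matrix

section Aux

lemma aux_mul_int {Ω : Type*} {mΩ : MeasurableSpace Ω} {μ : Measure Ω} {f g : Ω → ℝ} (hf : MemLp f 2 μ) (hg : MemLp g 2 μ) :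
    Integrable (fun ω => f ω * g ω) μ := by
  have h : MemLp (f • g) 1 μ := hg.smul hf
  rw [memLp_one_iff_integrable] at h
  exact h

lemma aux_indep_ae {Ω : Type*} {m mΩ : MeasurableSpace Ω} [StandardBorelSpace Ω]
    (μ : Measure Ω) [IsProbabilityMeasure μ]
    (hm : m ≤ mΩ) {f g : Ω → ℝ}
    (hf : Measurable f) (hg : Measurable g) (hci : CondIndepFun m hm f g μ) :
    ∀ᵐ ω ∂μ, IndepFun f g (condExpKernel μ m ω) := by
  rw [CondIndepFun] at hci
  rw [Kernel.indepFun_iff_measure_inter_preimage_eq_mul] at hci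
  have h : ∀ᵐ ω ∂(μ.trim hm), ∀ q r : ℚ,
      condExpKernel μ m ω (f ⁻¹' Set.Iic (q : ℝ) ∩ g ⁻¹' Set.Iic (r : ℝ))
        = condExpKernel μ m ω (f ⁻¹' Set.Iic (q : ℝ))
          * condExpKernel μ m ω (g ⁻¹' Set.Iic (r : ℝ)) := by
    rw [ae_all_iff]
    intro q
    rw [ae_all_iff]
    intro r
    exact hci _ _ measurableSet_Iic measurableSet_Iic
  filter_upwards [ae_of_ae_trim hm h] with ω hω
  have hgen : ∀ (φ : Ω → ℝ), MeasurableSpace.comap φ inferInstance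
      = MeasurableSpace.generateFrom {s : Set Ω | ∃ t ∈ (⋃ q : ℚ, {Set.Iic (q : ℝ)}), φ ⁻¹' t = s} := by
    intro φ
    conv_lhs => rw [show (inferInstance : MeasurableSpace ℝ) = borel ℝ from rfl,
      Real.borel_eq_generateFrom_Iic_rat]
    rw [MeasurableSpace.comap_generateFrom]
    exact congrArg _ (Set.ext fun s =>
      ⟨fun ⟨t, ht, h⟩ => ⟨t, ht, h⟩, fun ⟨t, ht, h⟩ => ⟨t, ht, h⟩⟩)
  have hp1 : IsPiSystem {s : Set Ω | ∃ t ∈ (⋃ q : ℚ, {Set.Iic (q : ℝ)}), f ⁻¹' t = s} :=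
    Real.isPiSystem_Iic_rat.comap f
  have hp2 : IsPiSystem {s : Set Ω | ∃ t ∈ (⋃ q : ℚ, {Set.Iic (q : ℝ)}), g ⁻¹' t = s} :=
    Real.isPiSystem_Iic_rat.comap g
  have hsets : IndepSets
      {s : Set Ω | ∃ t ∈ (⋃ q : ℚ, {Set.Iic (q : ℝ)}), f ⁻¹' t = s}
      {s : Set Ω | ∃ t ∈ (⋃ q : ℚ, {Set.Iic (q : ℝ)}), g ⁻¹' t = s}
      (condExpKernel μ m ω) := by
    rw [IndepSets_iff]
    rintro t1 t2 ⟨s1, hs1, rfl⟩ ⟨s2, hs2, rfl⟩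
    simp only [Set.mem_iUnion, Set.mem_singleton_iff] at hs1 hs2
    obtain ⟨q, rfl⟩ := hs1
    obtain ⟨r, rfl⟩ := hs2
    exact hω q r
  exact IndepSets.indep hf.comap_le hg.comap_le hp1 hp2 (hgen f) (hgen g) hsets

lemma aux_condexp_mul {Ω : Type*} {m mΩ : MeasurableSpace Ω} [StandardBorelSpace Ω]
    (μ : Measure Ω) [IsProbabilityMeasure μ]
    (hm : m ≤ mΩ) {f g : Ω → ℝ}
    (hf : Measurable f) (hg : Measurable g) (hci : CondIndepFun m hm f g μ)
    (hf2 : MemLp f 2 μ) (hg2 : MemLp g 2 μ) :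
    μ[fun ω => f ω * g ω|m] =ᵐ[μ] fun ω => (μ[f|m]) ω * (μ[g|m]) ω := by
  have hint : Integrable (fun ω => f ω * g ω) μ := aux_mul_int hf2 hg2
  have h1 := condExp_ae_eq_integral_condExpKernel hm hint
  have h2 := condExp_ae_eq_integral_condExpKernel hm (hf2.integrable one_le_two)
  have h3 := condExp_ae_eq_integral_condExpKernel hm (hg2.integrable one_le_two)
  have h4 := aux_indep_ae μ hm hf hg hci
  filter_upwards [h1, h2, h3, h4] with ω hω1 hω2 hω3 hω4
  rw [hω1, hω2, hω3]
  have := hω4.integral_mul_eq_mul_integral hf.aestronglyMeasurable hg.aestronglyMeasurable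
  simpa [Pi.mul_apply] using this

end Aux

theorem stmt10 {Ω : Type*} {mΩ : MeasurableSpace Ω} [StandardBorelSpace Ω]
    (μ : Measure Ω) [IsProbabilityMeasure μ]
    {d : ℕ} (X Xa : Ω → Fin d → ℝ) (Y : Ω → ℝ)
    (hXm : Measurable X) (hXam : Measurable Xa) (hYm : Measurable Y)
    (hX2 : ∀ j, MemLp (fun ω => X ω j) 2 μ)
    (hXa2 : ∀ j, MemLp (fun ω => Xa ω j) 2 μ) (hY2 : MemLp Y 2 μ)
    (mX : MeasurableSpace Ω) (hmXdef : mX = MeasurableSpace.comap X inferInstance)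
    (hmX : mX ≤ mΩ)
    (hci : CondIndepFun mX hmX Xa Y μ)
    (H : Matrix (Fin d) (Fin d) ℝ) (hH : IsUnit H.det)
    (hcond : ∀ j, (μ[fun ω => Xa ω j | mX]) =ᵐ[μ] fun ω => H⁻¹.mulVec (X ω) j)
    (Γ : Matrix (Fin d) (Fin d) ℝ)
    (hΓ : Γ = Matrix.of fun i j =>
      ∫ ω, (Xa ω i - H⁻¹.mulVec (X ω) i) * (Xa ω j - H⁻¹.mulVec (X ω) j) ∂μ)
    (μ0 : ℝ) (hμ0 : 0 < μ0)
    (hΓmin : ∀ θ : Fin d → ℝ, μ0 * ∑ j, θ j ^ 2 ≤ θ ⬝ᵥ Γ.mulVec θ)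
    (Ra R : (Fin d → ℝ) → ℝ)
    (hRa : ∀ θ, Ra θ = ∫ ω, (Y ω - ∑ j, θ j * Xa ω j) ^ 2 ∂μ)
    (hR : ∀ θ, R θ = ∫ ω, (Y ω - ∑ j, θ j * X ω j) ^ 2 ∂μ)
    (θa : Fin d → ℝ) (hθa : ∀ θ, Ra θa ≤ Ra θ)
    (θs : Fin d → ℝ) (hθs : ∀ θ, R θs ≤ R θ) :
    ∑ j, θa j ^ 2 ≤ (Ra θa - R θs) / μ0 := by
  classical
  haveI : SigmaFinite (μ.trim hmX) := inferInstance
  set V : Fin d → Ω → ℝ := fun j ω => H⁻¹.mulVec (X ω) j with hV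
  have hVsum : ∀ j ω, V j ω = ∑ i, H⁻¹ j i * X ω i := by
    intro j ω; simp [hV, Matrix.mulVec, dotProduct]
  have hXmX : Measurable[mX] X := by
    rw [hmXdef]; exact Measurable.of_comap_le le_rfl
  have hVmX : ∀ j, Measurable[mX] (V j) := by
    intro j
    have : V j = fun ω => ∑ i, H⁻¹ j i * X ω i := funext fun ω => hVsum j ω
    rw [this]
    exact Finset.measurable_sum _ fun i _ =>
      measurable_const.mul ((measurable_pi_apply i).comp hXmX)
  have hV2 : ∀ j, MemLp (V j) 2 μ := by
    intro j
    have : V j = fun ω => ∑ i, H⁻¹ j i * X ω i := funext fun ω => hVsum j ω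
    rw [this]
    exact memLp_finset_sum _ fun i _ => (hX2 i).const_mul _
  have hD2 : ∀ j, MemLp (fun ω => Xa ω j - V j ω) 2 μ :=
    fun j => (hXa2 j).sub (hV2 j)
  -- key identity 1 : mX-measurable weights
  have hWkey : ∀ (g : Ω → ℝ), Measurable[mX] g → MemLp g 2 μ → ∀ j,
      ∫ ω, g ω * Xa ω j ∂μ = ∫ ω, g ω * V j ω ∂μ := by
    intro g hgm hg2 j
    have hint1 : Integrable (fun ω => g ω * Xa ω j) μ := aux_mul_int hg2 (hXa2 j)
    have h1 : μ[fun ω => g ω * Xa ω j|mX]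
        =ᵐ[μ] fun ω => g ω * (μ[fun ω => Xa ω j|mX]) ω :=
      condExp_mul_of_stronglyMeasurable_left hgm.stronglyMeasurable hint1
        ((hXa2 j).integrable one_le_two)
    calc ∫ ω, g ω * Xa ω j ∂μ
        = ∫ ω, (μ[fun ω => g ω * Xa ω j|mX]) ω ∂μ := (integral_condExp hmX).symm
      _ = ∫ ω, g ω * (μ[fun ω => Xa ω j|mX]) ω ∂μ := integral_congr_ae h1
      _ = ∫ ω, g ω * V j ω ∂μ := integral_congr_ae (by
            filter_upwards [hcond j] with ω hω; rw [hω])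
  -- key identity 2 : weight Y (conditional independence)
  have hYkey : ∀ j, ∫ ω, Y ω * Xa ω j ∂μ = ∫ ω, Y ω * V j ω ∂μ := by
    intro j
    have hfm : Measurable[mΩ] fun ω => Xa ω j := (measurable_pi_apply j).comp hXam
    have hcij : CondIndepFun mX hmX (fun ω => Xa ω j) Y μ :=
      hci.comp (measurable_pi_apply j) measurable_id
    have hmul := aux_condexp_mul μ hmX hfm hYm hcij (hXa2 j) hY2
    have h2 : (fun ω => (μ[fun ω => Xa ω j|mX]) ω * (μ[Y|mX]) ω)
        =ᵐ[μ] fun ω => V j ω * (μ[Y|mX]) ω := by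
      filter_upwards [hcond j] with ω hω; rw [hω]
    have h3 : μ[fun ω => V j ω * Y ω|mX] =ᵐ[μ] fun ω => V j ω * (μ[Y|mX]) ω :=
      condExp_mul_of_stronglyMeasurable_left (hVmX j).stronglyMeasurable
        (aux_mul_int (hV2 j) hY2) (hY2.integrable one_le_two)
    have e1 : (fun ω => Y ω * Xa ω j) = fun ω => Xa ω j * Y ω := by
      funext ω; ring
    have e2 : (fun ω => V j ω * Y ω) = fun ω => Y ω * V j ω := by
      funext ω; ring
    calc ∫ ω, Y ω * Xa ω j ∂μ
        = ∫ ω, Xa ω j * Y ω ∂μ := by rw [e1]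
      _ = ∫ ω, (μ[fun ω => Xa ω j * Y ω|mX]) ω ∂μ := (integral_condExp hmX).symm
      _ = ∫ ω, (μ[fun ω => V j ω * Y ω|mX]) ω ∂μ :=
          integral_congr_ae ((hmul.trans h2).trans h3.symm)
      _ = ∫ ω, V j ω * Y ω ∂μ := integral_condExp hmX
      _ = ∫ ω, Y ω * V j ω ∂μ := by rw [e2]
  -- set up decomposition
  set u : Ω → ℝ := fun ω => Y ω - ∑ i, θa i * V i ω with hu
  set v : Ω → ℝ := fun ω => ∑ i, θa i * (Xa ω i - V i ω) with hv
  have hs2 : MemLp (fun ω => ∑ i, θa i * V i ω) 2 μ :=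
    memLp_finset_sum _ fun i _ => (hV2 i).const_mul _
  have hsm : Measurable[mX] (fun ω => ∑ i, θa i * V i ω) :=
    Finset.measurable_sum _ fun i _ => measurable_const.mul (hVmX i)
  have hu2 : MemLp u 2 μ := hY2.sub hs2
  have hv2 : MemLp v 2 μ := memLp_finset_sum _ fun i _ => (hD2 i).const_mul _
  have hpt : ∀ ω, Y ω - ∑ j, θa j * Xa ω j = u ω - v ω := by
    intro ω
    simp only [hu, hv, mul_sub, Finset.sum_sub_distrib]
    ring
  -- cross term vanishes
  have hcross : ∀ j, ∫ ω, u ω * (Xa ω j - V j ω) ∂μ = 0 := by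
    intro j
    have e1 : ∫ ω, u ω * Xa ω j ∂μ = ∫ ω, u ω * V j ω ∂μ := by
      have eY := hYkey j
      have eW := hWkey _ hsm hs2 j
      have l1 : (fun ω => u ω * Xa ω j)
          = fun ω => Y ω * Xa ω j - (∑ i, θa i * V i ω) * Xa ω j := by
        funext ω; simp only [hu]; ring
      have l2 : (fun ω => u ω * V j ω)
          = fun ω => Y ω * V j ω - (∑ i, θa i * V i ω) * V j ω := by
        funext ω; simp only [hu]; ring
      rw [l1, l2, integral_sub (aux_mul_int hY2 (hXa2 j)) (aux_mul_int hs2 (hXa2 j)),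
        integral_sub (aux_mul_int hY2 (hV2 j)) (aux_mul_int hs2 (hV2 j)), eY, eW]
    have l3 : (fun ω => u ω * (Xa ω j - V j ω))
        = fun ω => u ω * Xa ω j - u ω * V j ω := by
      funext ω; ring
    rw [l3, integral_sub (aux_mul_int hu2 (hXa2 j)) (aux_mul_int hu2 (hV2 j)), e1, sub_self]
  have huv : ∫ ω, u ω * v ω ∂μ = 0 := by
    have l : (fun ω => u ω * v ω)
        = fun ω => ∑ j, θa j * (u ω * (Xa ω j - V j ω)) := by
      funext ω
      simp only [hv, Finset.mul_sum]
      exact Finset.sum_congr rfl fun j _ => by ring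
    rw [l, integral_finset_sum _ fun j _ => (aux_mul_int hu2 (hD2 j)).const_mul _]
    exact Finset.sum_eq_zero fun j _ => by rw [integral_const_mul, hcross j, mul_zero]
  -- quadratic term
  have hvv : ∫ ω, v ω * v ω ∂μ = θa ⬝ᵥ Γ.mulVec θa := by
    have l : (fun ω => v ω * v ω) = fun ω => ∑ i, ∑ j,
        (θa i * θa j) * ((Xa ω i - V i ω) * (Xa ω j - V j ω)) := by
      funext ω
      simp only [hv]
      rw [Finset.sum_mul_sum]
      exact Finset.sum_congr rfl fun i _ => Finset.sum_congr rfl fun j _ => by ring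
    rw [l, integral_finset_sum _ fun i _ => integrable_finset_sum _ fun j _ =>
      (aux_mul_int (hD2 i) (hD2 j)).const_mul _]
    have step : ∀ i, (∫ ω, ∑ j, (θa i * θa j) * ((Xa ω i - V i ω) * (Xa ω j - V j ω)) ∂μ)
        = ∑ j, (θa i * θa j) * Γ i j := by
      intro i
      rw [integral_finset_sum _ fun j _ => (aux_mul_int (hD2 i) (hD2 j)).const_mul _]
      refine Finset.sum_congr rfl fun j _ => ?_
      rw [integral_const_mul, hΓ]
      rfl
    calc (∑ i, ∫ ω, ∑ j, (θa i * θa j) * ((Xa ω i - V i ω) * (Xa ω j - V j ω)) ∂μ)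
        = ∑ i, ∑ j, (θa i * θa j) * Γ i j := Finset.sum_congr rfl fun i _ => step i
      _ = θa ⬝ᵥ Γ.mulVec θa := by
          simp only [dotProduct, Matrix.mulVec, Finset.mul_sum]
          exact Finset.sum_congr rfl fun i _ => Finset.sum_congr rfl fun j _ => by ring
  -- u² term equals R at a transformed parameter
  have huR : ∫ ω, u ω * u ω ∂μ = R (fun j => ∑ i, θa i * H⁻¹ i j) := by
    rw [hR]
    refine integral_congr_ae (Filter.Eventually.of_forall fun ω => ?_)
    show u ω * u ω = (Y ω - ∑ j, (∑ i, θa i * H⁻¹ i j) * X ω j) ^ 2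
    have l : ∑ j, (∑ i, θa i * H⁻¹ i j) * X ω j = ∑ i, θa i * V i ω := by
      simp only [Finset.sum_mul]
      rw [Finset.sum_comm]
      refine Finset.sum_congr rfl fun i _ => ?_
      rw [hVsum i ω, Finset.mul_sum]
      exact Finset.sum_congr rfl fun j _ => by ring
    rw [l]
    simp only [hu]
    ring
  -- decomposition of Ra θa
  have hRa_eq : Ra θa = ∫ ω, u ω * u ω ∂μ - 2 * ∫ ω, u ω * v ω ∂μ + ∫ ω, v ω * v ω ∂μ := by
    rw [hRa]
    have l : (fun ω => (Y ω - ∑ j, θa j * Xa ω j) ^ 2)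
        = fun ω => (u ω * u ω - 2 * (u ω * v ω)) + v ω * v ω := by
      funext ω; rw [hpt ω]; ring
    have i1 : Integrable (fun ω => u ω * u ω) μ := aux_mul_int hu2 hu2
    have i2 : Integrable (fun ω => 2 * (u ω * v ω)) μ := (aux_mul_int hu2 hv2).const_mul 2
    have i3 : Integrable (fun ω => u ω * u ω - 2 * (u ω * v ω)) μ := i1.sub i2
    rw [l, integral_add i3 (aux_mul_int hv2 hv2), integral_sub i1 i2, integral_const_mul]
  -- conclude
  have h1 : R θs ≤ ∫ ω, u ω * u ω ∂μ := huR ▸ hθs _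
  have h2 : μ0 * ∑ j, θa j ^ 2 ≤ ∫ ω, v ω * v ω ∂μ := hvv ▸ hΓmin θa
  have hfinal : μ0 * ∑ j, θa j ^ 2 ≤ Ra θa - R θs := by
    rw [hRa_eq, huv]
    linarith
  rw [le_div_iff₀ hμ0]
  linarith
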